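/- Let B be diagonal with entries ≥ ε > 0, let w0 = e_j, x0 = 0, and A, D as above. Then the deadbeat cost satisfies J_{(A,B,D,0,e_j)}(Γ^Δ) = e_j^T B (A^T B^{-2} A + B^{-2} + I) B e_j = b_{jj}^2 + 1 + Σ_i a_{ij}^2 b_{jj}^2 / b_{ii}^2. -/

import Mathlib

open Matrix

theorem stmt_17 (n : ℕ) (ε : ℝ) (hε : 0 < ε)
    (A B D : Matrix (Fin n) (Fin n) ℝ)
    (hBdiag : B.IsDiag) (hBε : ∀ i, ε ≤ B i i) (hDdiag : D.IsDiag)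
    (x w xK u : ℕ → Fin n → ℝ) (j : Fin n)
    (hx0 : x 0 = 0) (hw0 : w 0 = Pi.single j 1)
    (hx : ∀ k, x (k + 1) = A *ᵥ x k + B *ᵥ (u k + w k))
    (hw : ∀ k, w (k + 1) = D *ᵥ w k)
    (hxK0 : xK 0 = 0)
    (hxK : ∀ k, xK (k + 1) = D *ᵥ xK k - (B⁻¹ * D ^ 2) *ᵥ x k)
    (hu : ∀ k, u k = xK k - (B⁻¹ * (A + D)) *ᵥ x k) :
    (∑' k : ℕ, (x k ⬝ᵥ x k + (u k + w k) ⬝ᵥ (u k + w k)))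
        = Pi.single j 1 ⬝ᵥ (B *ᵥ ((Aᵀ * (B ^ 2)⁻¹ * A + (B ^ 2)⁻¹ + 1) *ᵥ
            (B *ᵥ (Pi.single j 1 : Fin n → ℝ)))) ∧
      Pi.single j 1 ⬝ᵥ (B *ᵥ ((Aᵀ * (B ^ 2)⁻¹ * A + (B ^ 2)⁻¹ + 1) *ᵥ
            (B *ᵥ (Pi.single j 1 : Fin n → ℝ))))
        = (B j j) ^ 2 + 1 + ∑ i, (A i j) ^ 2 * (B j j) ^ 2 / (B i i) ^ 2 := by
  have hBne : ∀ i, B i i ≠ 0 := fun i => (lt_of_lt_of_le hε (hBε i)).ne'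
  have hBd : B = Matrix.diagonal (fun i => B i i) := (Matrix.IsDiag.diagonal_diag hBdiag).symm
  have hDd : D = Matrix.diagonal (fun i => D i i) := (Matrix.IsDiag.diagonal_diag hDdiag).symm
  have hBinv : B⁻¹ = Matrix.diagonal (fun i => (B i i)⁻¹) := by
    apply Matrix.inv_eq_right_inv
    nth_rewrite 1 [hBd]
    rw [Matrix.diagonal_mul_diagonal,
      show (fun i => B i i * (B i i)⁻¹) = (1 : Fin n → ℝ) from
        funext fun i => mul_inv_cancel₀ (hBne i)]
    exact Matrix.diagonal_one
  have hBoff : ∀ i k : Fin n, i ≠ k → B i k = 0 := fun i k h => hBdiag h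
  have hDoff : ∀ i k : Fin n, i ≠ k → D i k = 0 := fun i k h => hDdiag h
  -- step 0
  have hu0 : u 0 = 0 := by rw [hu 0, hxK0, hx0]; simp
  -- step 1
  have hx1 : x 1 = fun i => B i j := by
    rw [hx 0, hx0, hu0, hw0]
    funext i
    simp [Matrix.mulVec_single]
  have hxK1 : xK 1 = 0 := by rw [hxK 0, hxK0, hx0]; simp
  have hAx1 : ∀ (M : Matrix (Fin n) (Fin n) ℝ) i, (M *ᵥ x 1) i = M i j * B j j := by
    intro M i
    rw [hx1]
    simp only [Matrix.mulVec, dotProduct]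
    exact Finset.sum_eq_single j (fun k _ hk => by rw [hBoff k j hk, mul_zero])
      (fun h => absurd (Finset.mem_univ j) h)
  have huw1 : (u 1 + w 1) = fun i => -(A i j * B j j / B i i) := by
    funext i
    rw [hu 1, hxK1, hw 0, hw0]
    have h1 : ((B⁻¹ * (A + D)) *ᵥ x 1) i = (B i i)⁻¹ * ((A i j + D i j) * B j j) := by
      rw [← Matrix.mulVec_mulVec, hBinv, Matrix.mulVec_diagonal, hAx1 (A + D) i]
      simp [Matrix.add_apply]
    have h2 : (D *ᵥ Pi.single j 1) i = D i j := by simp [Matrix.mulVec_single]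
    simp only [Pi.add_apply, Pi.sub_apply, Pi.zero_apply, h1, h2]
    rcases eq_or_ne i j with rfl | hij
    · have hb : B i i ≠ 0 := hBne i
      field_simp
      ring
    · have hb : B i i ≠ 0 := hBne i
      rw [hDoff i j hij]
      field_simp
      ring
  -- step 2
  have hx2 : x 2 = 0 := by
    rw [hx 1]
    funext i
    have h1 : (A *ᵥ x 1) i = A i j * B j j := hAx1 A i
    have h2 : (B *ᵥ (u 1 + w 1)) i = -(A i j * B j j) := by
      rw [huw1]
      simp only [Matrix.mulVec, dotProduct]
      rw [Finset.sum_eq_single i (fun k _ hk => by rw [hBoff i k (Ne.symm hk), zero_mul])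
        (fun h => absurd (Finset.mem_univ i) h)]
      have hb : B i i ≠ 0 := hBne i
      field_simp
    simp [h1, h2]
  have hw1e : ∀ i, w 1 i = D i j := by
    intro i; rw [hw 0, hw0]; simp [Matrix.mulVec_single]
  have hxKw2 : xK 2 + w 2 = 0 := by
    funext i
    have hK : xK 2 i = -((B i i)⁻¹ * ((D ^ 2) i j * B j j)) := by
      rw [hxK 1, hxK1]
      have : ((B⁻¹ * D ^ 2) *ᵥ x 1) i = (B i i)⁻¹ * ((D ^ 2) i j * B j j) := by
        rw [← Matrix.mulVec_mulVec, hBinv, Matrix.mulVec_diagonal, hAx1 (D ^ 2) i]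
      simp [this]
    have hW : w 2 i = D i i * D i j := by
      rw [hw 1]
      simp only [Matrix.mulVec, dotProduct]
      rw [Finset.sum_eq_single i (fun k _ hk => by rw [hDoff i k (Ne.symm hk), zero_mul])
        (fun h => absurd (Finset.mem_univ i) h), hw1e i]
    have hD2 : (D ^ 2) i j = D i i * D i j := by
      rw [hDd]
      rcases eq_or_ne i j with rfl | hij
      · simp [Matrix.diagonal_pow, pow_two]
      · simp [Matrix.diagonal_pow, Matrix.diagonal_apply_ne _ hij]
    rcases eq_or_ne i j with rfl | hij
    · have hb : B i i ≠ 0 := hBne i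
      simp only [Pi.add_apply, Pi.zero_apply, hK, hW, hD2]
      field_simp
      ring
    · simp [hK, hW, hD2, hDoff i j hij]
  -- all later terms vanish
  have hzero : ∀ k, x (k + 2) = 0 ∧ xK (k + 2) + w (k + 2) = 0 := by
    intro k
    induction k with
    | zero => exact ⟨hx2, hxKw2⟩
    | succ m ih =>
      have hun : u (m + 2) = xK (m + 2) := by rw [hu, ih.1]; simp
      have huwn : u (m + 2) + w (m + 2) = 0 := by rw [hun, ih.2]
      refine ⟨?_, ?_⟩
      · show x (m + 2 + 1) = 0
        rw [hx (m + 2), ih.1, huwn]; simp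
      · show xK (m + 2 + 1) + w (m + 2 + 1) = 0
        rw [hxK (m + 2), hw (m + 2), ih.1]
        simp only [Matrix.mulVec_zero, sub_zero]
        rw [← Matrix.mulVec_add, ih.2, Matrix.mulVec_zero]
  have hfzero : ∀ k ∉ ({0, 1} : Finset ℕ),
      (x k ⬝ᵥ x k + (u k + w k) ⬝ᵥ (u k + w k)) = 0 := by
    intro k hk
    simp only [Finset.mem_insert, Finset.mem_singleton, not_or] at hk
    obtain ⟨m, rfl⟩ : ∃ m, k = m + 2 := by
      refine ⟨k - 2, ?_⟩
      omega
    have h1 := (hzero m).1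
    have hun : u (m + 2) = xK (m + 2) := by rw [hu, h1]; simp
    have huwn : u (m + 2) + w (m + 2) = 0 := by rw [hun, (hzero m).2]
    rw [h1, huwn]
    simp
  -- compute tsum
  have htsum : (∑' k : ℕ, (x k ⬝ᵥ x k + (u k + w k) ⬝ᵥ (u k + w k)))
      = (B j j) ^ 2 + 1 + ∑ i, (A i j) ^ 2 * (B j j) ^ 2 / (B i i) ^ 2 := by
    rw [tsum_eq_sum hfzero]
    have hs : ({0, 1} : Finset ℕ).sum (fun k => x k ⬝ᵥ x k + (u k + w k) ⬝ᵥ (u k + w k))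
        = (x 0 ⬝ᵥ x 0 + (u 0 + w 0) ⬝ᵥ (u 0 + w 0))
          + (x 1 ⬝ᵥ x 1 + (u 1 + w 1) ⬝ᵥ (u 1 + w 1)) := by
      rw [Finset.sum_insert (by simp), Finset.sum_singleton]
    rw [hs, hx0, hu0, hw0, hx1, huw1]
    have h0 : (Pi.single j 1 : Fin n → ℝ) ⬝ᵥ Pi.single j 1 = 1 := by
      simp [dotProduct, Pi.single_apply]
    have hx1d : ((fun i => B i j) ⬝ᵥ fun i => B i j) = (B j j) ^ 2 := by
      simp only [dotProduct]
      rw [Finset.sum_eq_single j (fun k _ hk => by rw [hBoff k j hk, mul_zero])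
        (fun h => absurd (Finset.mem_univ j) h), pow_two]
    have huwd : ((fun i => -(A i j * B j j / B i i)) ⬝ᵥ fun i => -(A i j * B j j / B i i))
        = ∑ i, (A i j) ^ 2 * (B j j) ^ 2 / (B i i) ^ 2 := by
      simp only [dotProduct]
      refine Finset.sum_congr rfl fun i _ => ?_
      field_simp
    simp only [zero_dotProduct, zero_add, h0, hx1d, huwd]
    ring
  -- compute the matrix expression
  have hmat : Pi.single j 1 ⬝ᵥ (B *ᵥ ((Aᵀ * (B ^ 2)⁻¹ * A + (B ^ 2)⁻¹ + 1) *ᵥ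
        (B *ᵥ (Pi.single j 1 : Fin n → ℝ))))
      = (B j j) ^ 2 + 1 + ∑ i, (A i j) ^ 2 * (B j j) ^ 2 / (B i i) ^ 2 := by
    have hC : (B ^ 2)⁻¹ = Matrix.diagonal (fun i => ((B i i) ^ 2)⁻¹) := by
      apply Matrix.inv_eq_right_inv
      nth_rewrite 1 [hBd]
      rw [Matrix.diagonal_pow, Matrix.diagonal_mul_diagonal,
        show (fun i => ((fun i => B i i) ^ 2) i * ((B i i) ^ 2)⁻¹) = (1 : Fin n → ℝ) from
          funext fun i => mul_inv_cancel₀ (pow_ne_zero 2 (hBne i))]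
      exact Matrix.diagonal_one
    have hv : B *ᵥ (Pi.single j 1 : Fin n → ℝ) = fun i => B i j := by
      funext i; simp [Matrix.mulVec_single]
    have hMv : ∀ (M : Matrix (Fin n) (Fin n) ℝ) i, (M *ᵥ fun i => B i j) i = M i j * B j j := by
      intro M i
      simp only [Matrix.mulVec, dotProduct]
      exact Finset.sum_eq_single j (fun k _ hk => by rw [hBoff k j hk, mul_zero])
        (fun h => absurd (Finset.mem_univ j) h)
    rw [hv]
    set M := Aᵀ * (B ^ 2)⁻¹ * A + (B ^ 2)⁻¹ + 1 with hM
    have hdot : Pi.single j 1 ⬝ᵥ (B *ᵥ (M *ᵥ fun i => B i j)) = (B *ᵥ (M *ᵥ fun i => B i j)) j := by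
      simp [dotProduct, Pi.single_apply]
    have hBj : (B *ᵥ (M *ᵥ fun i => B i j)) j = B j j * (M *ᵥ fun i => B i j) j := by
      simp only [Matrix.mulVec, dotProduct]
      exact Finset.sum_eq_single j (fun k _ hk => by rw [hBoff j k (Ne.symm hk), zero_mul])
        (fun h => absurd (Finset.mem_univ j) h)
    have hMjj : (M *ᵥ fun i => B i j) j = M j j * B j j := hMv M j
    have hAtCA : (Aᵀ * (B ^ 2)⁻¹ * A) j j = ∑ i, A i j * (((B i i) ^ 2)⁻¹ * A i j) := by
      rw [Matrix.mul_assoc, Matrix.mul_apply]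
      refine Finset.sum_congr rfl fun i _ => ?_
      rw [Matrix.transpose_apply, Matrix.mul_apply, hC]
      congr 1
      rw [Finset.sum_eq_single i (fun k _ hk => by simp [Matrix.diagonal_apply_ne _ (Ne.symm hk)])
        (fun h => absurd (Finset.mem_univ i) h)]
      simp
    have hMjjval : M j j = (∑ i, A i j * (((B i i) ^ 2)⁻¹ * A i j)) + ((B j j) ^ 2)⁻¹ + 1 := by
      rw [hM]
      simp only [Matrix.add_apply, Matrix.one_apply_eq, hAtCA]
      rw [hC, Matrix.diagonal_apply_eq]
    rw [hdot, hBj, hMjj, hMjjval]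
    have : (B j j * (((∑ i, A i j * (((B i i) ^ 2)⁻¹ * A i j)) + ((B j j) ^ 2)⁻¹ + 1) * B j j))
        = (∑ i, A i j * (((B i i) ^ 2)⁻¹ * A i j)) * (B j j * B j j)
          + ((B j j) ^ 2)⁻¹ * (B j j * B j j) + B j j * B j j := by ring
    rw [this]
    have h1 : ((B j j) ^ 2)⁻¹ * (B j j * B j j) = 1 := by
      rw [← pow_two]
      exact inv_mul_cancel₀ (pow_ne_zero 2 (hBne j))
    have h2 : (∑ i, A i j * (((B i i) ^ 2)⁻¹ * A i j)) * (B j j * B j j)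
        = ∑ i, (A i j) ^ 2 * (B j j) ^ 2 / (B i i) ^ 2 := by
      rw [Finset.sum_mul]
      refine Finset.sum_congr rfl fun i _ => ?_
      field_simp
    rw [h1, h2, pow_two]
    ring
  exact ⟨htsum.trans hmat.symm, hmat⟩
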